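/- Assume Q_A ≠ ℂ_J for a single J (i.e. the quadratic cone is not a single complex plane). A slice function f on Ω_D is slice preserving (i.e. its stem function components F₁, F₂ are real-valued) if and only if f(Ω_D ∩ ℂ_J) ⊆ ℂ_J for every J ∈ S_A. -/

import Mathlib

variable {A : Type*} [NonAssocRing A] [Module ℝ A] [StarRing A]

/-- The quadratic cone of a real alternative *-algebra. -/
def QCone (x : A) : Prop :=
  (∃ r : ℝ, x = r • (1 : A)) ∨
  (∃ t n : ℝ, x + star x = t • (1 : A) ∧ x * star x = n • (1 : A) ∧ t ^ 2 - 4 * n < 0)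

/-- Square roots of `-1` in the quadratic cone. -/
def SqrtNegOne (J : A) : Prop := QCone J ∧ J * J = -1

lemma aux_exists_other_sqrt [StarModule ℝ A] [IsScalarTower ℝ A A]
    [SMulCommClass ℝ A A] (x J : A) (hx : QCone x)
    (hxs : x ∉ (Submodule.span ℝ ({1, J} : Set A) : Set A)) :
    ∃ J' : A, SqrtNegOne J' ∧ J' ∉ (Submodule.span ℝ ({1, J} : Set A) : Set A) := by
  have h1mem : (1 : A) ∈ Submodule.span ℝ ({1, J} : Set A) :=
    Submodule.subset_span (by simp)
  rcases hx with ⟨r, hr⟩ | ⟨t, n, ht, hn, hd⟩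
  · exact absurd (hr ▸ Submodule.smul_mem _ r h1mem) hxs
  · set m : ℝ := n - t ^ 2 / 4 with hm_def
    have hm : 0 < m := by simp only [hm_def]; nlinarith
    have hstarx : star x = t • (1 : A) - x := by
      rw [← ht]; abel
    have hxx : x * x = t • x - n • (1 : A) := by
      have : x * (t • (1 : A) - x) = n • (1 : A) := by rw [← hstarx]; exact hn
      rw [mul_sub, mul_smul_comm, mul_one] at this
      linear_combination (norm := module) -this
    set y : A := x - (t / 2) • 1 with hy_def
    have hyy : y * y = (-m) • (1 : A) := by
      simp only [hy_def, sub_mul, mul_sub, smul_mul_assoc, mul_smul_comm, smul_smul,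
        one_mul, mul_one, hxx]
      match_scalars <;> ring
    set c : ℝ := (Real.sqrt m)⁻¹ with hc_def
    have hsm : Real.sqrt m ≠ 0 := ne_of_gt (Real.sqrt_pos.mpr hm)
    have hcc : c * c * m = 1 := by
      rw [hc_def, ← mul_inv]
      rw [← Real.sqrt_mul_self hm.le]
      field_simp
      exact (Real.sq_sqrt (Real.sqrt_nonneg _)).symm
    set J' : A := c • y with hJ'_def
    have hJ'J' : J' * J' = -1 := by
      rw [hJ'_def, smul_mul_assoc, mul_smul_comm, smul_smul, hyy, smul_smul]
      rw [show c * c * -m = -(c * c * m) by ring, hcc]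
      simp
    have hstary : star y = -y := by
      simp only [hy_def]
      rw [star_sub, hstarx, star_smul, star_one, star_trivial]
      match_scalars <;> ring
    have hstarJ' : star J' = -J' := by
      rw [hJ'_def, star_smul, hstary, smul_neg, star_trivial]
    refine ⟨J', ⟨Or.inr ⟨0, 1, ?_, ?_, by norm_num⟩, hJ'J'⟩, ?_⟩
    · rw [hstarJ']; simp
    · rw [hstarJ', mul_neg, hJ'J']; simp
    · intro hJ'mem
      apply hxs
      have hx_eq : x = Real.sqrt m • J' + (t / 2) • (1 : A) := by
        rw [hJ'_def, smul_smul, hc_def, mul_inv_cancel₀ hsm, one_smul, hy_def]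
        abel
      rw [hx_eq]
      exact Submodule.add_mem _ (Submodule.smul_mem _ _ hJ'mem)
        (Submodule.smul_mem _ _ h1mem)

lemma aux_mul_mem [IsScalarTower ℝ A A] [SMulCommClass ℝ A A]
    (J : A) (hJ : J * J = -1) {p : A}
    (hp : p ∈ Submodule.span ℝ ({1, J} : Set A)) :
    J * p ∈ Submodule.span ℝ ({1, J} : Set A) := by
  have h1mem : (1 : A) ∈ Submodule.span ℝ ({1, J} : Set A) :=
    Submodule.subset_span (by simp)
  have hJmem : J ∈ Submodule.span ℝ ({1, J} : Set A) :=
    Submodule.subset_span (by simp)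
  rcases Submodule.mem_span_pair.mp hp with ⟨a, b, rfl⟩
  rw [mul_add, mul_smul_comm, mul_smul_comm, mul_one, hJ]
  exact Submodule.add_mem _ (Submodule.smul_mem _ _ hJmem)
    (Submodule.smul_mem _ _ (Submodule.neg_mem _ h1mem))

/-- Assuming the quadratic cone is not a single complex plane, a slice function is slice
preserving (its stem components are real-valued) if and only if it maps every plane
`ℂ_J` into itself. -/
theorem slice_preserving_iff [StarModule ℝ A] [IsScalarTower ℝ A A]
    [SMulCommClass ℝ A A] [FiniteDimensional ℝ A]
    (h1 : ∀ x y : A, (x * x) * y = x * (x * y))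
    (h2 : ∀ x y : A, (y * x) * x = y * (x * x))
    (hone : (1 : A) ≠ 0)
    (hSA : ∃ J : A, SqrtNegOne J)
    (hQ : ∀ J : A, SqrtNegOne J →
      ∃ x : A, QCone x ∧ x ∉ (Submodule.span ℝ ({1, J} : Set A) : Set A))
    (D : Set ℂ) (hD : ∀ z ∈ D, (starRingEnd ℂ) z ∈ D)
    (hDslice : ∀ z ∈ D, ∃ r s : ℝ, z = (r : ℂ) + s * Complex.I)
    (F₁ F₂ : ℂ → A)
    (hs1 : ∀ z ∈ D, F₁ ((starRingEnd ℂ) z) = F₁ z)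
    (hs2 : ∀ z ∈ D, F₂ ((starRingEnd ℂ) z) = - F₂ z)
    (f : A → A)
    (hf : ∀ (r s : ℝ) (J : A), SqrtNegOne J → (r : ℂ) + s * Complex.I ∈ D →
      f (r • (1 : A) + s • J)
        = F₁ ((r : ℂ) + s * Complex.I) + J * F₂ ((r : ℂ) + s * Complex.I)) :
    (∀ z ∈ D, (∃ r : ℝ, F₁ z = r • (1 : A)) ∧ (∃ r : ℝ, F₂ z = r • (1 : A))) ↔
    (∀ J : A, SqrtNegOne J → ∀ r s : ℝ, (r : ℂ) + s * Complex.I ∈ D →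
      f (r • (1 : A) + s • J) ∈ Submodule.span ℝ ({1, J} : Set A)) := by
  constructor
  · intro h J hJ r s hmem
    have h1mem : (1 : A) ∈ Submodule.span ℝ ({1, J} : Set A) :=
      Submodule.subset_span (by simp)
    have hJmem : J ∈ Submodule.span ℝ ({1, J} : Set A) :=
      Submodule.subset_span (by simp)
    rw [hf r s J hJ hmem]
    obtain ⟨⟨a, ha⟩, ⟨b, hb⟩⟩ := h _ hmem
    rw [ha, hb, mul_smul_comm, mul_one]
    exact Submodule.add_mem _ (Submodule.smul_mem _ _ h1mem)
      (Submodule.smul_mem _ _ hJmem)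
  · intro h z hz
    obtain ⟨r, s, hzrs⟩ := hDslice z hz
    subst hzrs
    set z : ℂ := (r : ℂ) + s * Complex.I with hz_def
    have hconj : (starRingEnd ℂ) z = (r : ℂ) + (-s : ℝ) * Complex.I := by
      simp [hz_def, Complex.ext_iff]
    have hconjD : ((r : ℂ) + (-s : ℝ) * Complex.I) ∈ D := by
      rw [← hconj]; exact hD z hz
    -- For any square root of -1, both stem components lie in its plane.
    have key : ∀ J : A, SqrtNegOne J →
        F₁ z ∈ Submodule.span ℝ ({1, J} : Set A) ∧
        F₂ z ∈ Submodule.span ℝ ({1, J} : Set A) := by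
      intro J hJ
      have hu : F₁ z + J * F₂ z ∈ Submodule.span ℝ ({1, J} : Set A) := by
        have := h J hJ r s hz
        rwa [hf r s J hJ hz] at this
      have hv : F₁ z - J * F₂ z ∈ Submodule.span ℝ ({1, J} : Set A) := by
        have hmem := h J hJ r (-s) hconjD
        rw [hf r (-s) J hJ hconjD, ← hconj, hs1 z hz, hs2 z hz, mul_neg] at hmem
        rwa [sub_eq_add_neg]
      have hF1 : F₁ z ∈ Submodule.span ℝ ({1, J} : Set A) := by
        have : F₁ z = (2⁻¹ : ℝ) • ((F₁ z + J * F₂ z) + (F₁ z - J * F₂ z)) := by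
          match_scalars <;> norm_num
        rw [this]
        exact Submodule.smul_mem _ _ (Submodule.add_mem _ hu hv)
      have hJF2 : J * F₂ z ∈ Submodule.span ℝ ({1, J} : Set A) := by
        have : J * F₂ z = (2⁻¹ : ℝ) • ((F₁ z + J * F₂ z) - (F₁ z - J * F₂ z)) := by
          match_scalars <;> norm_num
        rw [this]
        exact Submodule.smul_mem _ _ (Submodule.sub_mem _ hu hv)
      refine ⟨hF1, ?_⟩
      have : F₂ z = -(J * (J * F₂ z)) := by
        rw [← h1, hJ.2, neg_mul, one_mul, neg_neg]
      rw [this]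
      exact Submodule.neg_mem _ (aux_mul_mem J hJ.2 hJF2)
    obtain ⟨J, hJ⟩ := hSA
    obtain ⟨x, hxQ, hxs⟩ := hQ J hJ
    obtain ⟨J', hJ', hJ's⟩ := aux_exists_other_sqrt x J hxQ hxs
    have h1mem : (1 : A) ∈ Submodule.span ℝ ({1, J} : Set A) :=
      Submodule.subset_span (by simp)
    -- intersection argument
    have final : ∀ v : A, v ∈ Submodule.span ℝ ({1, J} : Set A) →
        v ∈ Submodule.span ℝ ({1, J'} : Set A) → ∃ a : ℝ, v = a • (1 : A) := by
      intro v hvJ hvJ'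
      rcases Submodule.mem_span_pair.mp hvJ' with ⟨a', b', hv'⟩
      by_cases hb' : b' = 0
      · exact ⟨a', by rw [← hv', hb', zero_smul, add_zero]⟩
      · exfalso
        apply hJ's
        have hv2 : b' • J' = v - a' • (1 : A) := by rw [← hv']; abel
        have : J' = b'⁻¹ • (v - a' • (1 : A)) := by
          rw [← hv2, smul_smul, inv_mul_cancel₀ hb', one_smul]
        rw [this]
        exact Submodule.smul_mem _ _ (Submodule.sub_mem _ hvJ
          (Submodule.smul_mem _ _ h1mem))
    exact ⟨final _ (key J hJ).1 (key J' hJ').1, final _ (key J hJ).2 (key J' hJ').2⟩
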